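/- Let k < 0, let a < b, and let g : [a,b] → ℝ be a C², positive-valued, distance-like function. Suppose that for every t₁, t₂ with a ≤ t₁ < t₂ ≤ b there exist u ∈ ℝ and v > 0 with g_k(t₁; u, v) = g(t₁), g_k(t₂; u, v) = g(t₂), and g(t) ≤ g_k(t; u, v) for all t ∈ [t₁, t₂]. Then g''(t) ≥ √(−k)·(1 − (g'(t))²)·coth(√(−k)·g(t)) holds for all t ∈ [a,b]. -/

import Mathlib

open Set

noncomputable def arcosh (x : ℝ) : ℝ := Real.log (x + Real.sqrt (x ^ 2 - 1))

noncomputable def coth (x : ℝ) : ℝ := Real.cosh x / Real.sinh x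

/-- The hyperbolic comparison function. -/
noncomputable def gHyp (k u v t : ℝ) : ℝ :=
  (1 / Real.sqrt (-k)) *
    arcosh (((u ^ 2 + v ^ 2) * Real.exp (-(Real.sqrt (-k)) * t) +
      Real.exp (Real.sqrt (-k) * t)) / (2 * v))

lemma cosh_arcosh {x : ℝ} (hx : 1 ≤ x) : Real.cosh (arcosh x) = x := by
  have h1 : 0 ≤ x ^ 2 - 1 := by nlinarith
  have hr : Real.sqrt (x ^ 2 - 1) ^ 2 = x ^ 2 - 1 := Real.sq_sqrt h1
  have hrnn : 0 ≤ Real.sqrt (x ^ 2 - 1) := Real.sqrt_nonneg _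
  have hy : 0 < x + Real.sqrt (x ^ 2 - 1) := by linarith
  have hmul : (x + Real.sqrt (x ^ 2 - 1)) * (x - Real.sqrt (x ^ 2 - 1)) = 1 := by nlinarith
  have hinv : (x + Real.sqrt (x ^ 2 - 1))⁻¹ = x - Real.sqrt (x ^ 2 - 1) :=
    inv_eq_of_mul_eq_one_right hmul
  rw [arcosh, Real.cosh_eq, Real.exp_log hy, Real.exp_neg, Real.exp_log hy, hinv]
  ring

lemma cosh_sqrt_gHyp (k u v : ℝ) (hk : k < 0) (hv : 0 < v) (t : ℝ) :
    Real.cosh (Real.sqrt (-k) * gHyp k u v t) =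
      ((u ^ 2 + v ^ 2) * Real.exp (-(Real.sqrt (-k)) * t) +
        Real.exp (Real.sqrt (-k) * t)) / (2 * v) := by
  set s := Real.sqrt (-k) with hsdef
  have hs : 0 < s := Real.sqrt_pos.2 (by linarith)
  have hA : 0 < Real.exp (-s * t) := Real.exp_pos _
  have hB : 0 < Real.exp (s * t) := Real.exp_pos _
  have hAB : Real.exp (-s * t) * Real.exp (s * t) = 1 := by
    rw [← Real.exp_add]; norm_num
  set A := Real.exp (-s * t)
  set B := Real.exp (s * t)
  have key : B * (v * A - 1) ^ 2 = v ^ 2 * A - 2 * v + B := by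
    linear_combination (v ^ 2 * A - 2 * v) * hAB
  have hX : 1 ≤ ((u ^ 2 + v ^ 2) * A + B) / (2 * v) := by
    rw [le_div_iff₀ (by positivity)]
    nlinarith [mul_nonneg hB.le (sq_nonneg (v * A - 1)), mul_nonneg (sq_nonneg u) hA.le]
  rw [gHyp, ← hsdef]
  rw [show s * (1 / s * arcosh (((u ^ 2 + v ^ 2) * A + B) / (2 * v)))
      = arcosh (((u ^ 2 + v ^ 2) * A + B) / (2 * v)) by field_simp]
  exact cosh_arcosh hX

theorem diff_ineq_of_hyp_comparison (k : ℝ) (hk : k < 0) (a b : ℝ) (hab : a < b) (g : ℝ → ℝ)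
    (hC2 : ContDiffOn ℝ 2 g (Icc a b))
    (hpos : ∀ t ∈ Icc a b, 0 < g t)
    (hnonexp : ∀ t₁ ∈ Icc a b, ∀ t₂ ∈ Icc a b, |g t₁ - g t₂| ≤ |t₁ - t₂|)
    (hdistlike : ∀ t₁ ∈ Icc a b, ∀ t₂ ∈ Icc a b, |t₁ - t₂| ≤ g t₁ + g t₂)
    (hcmp : ∀ t₁ t₂, a ≤ t₁ → t₁ < t₂ → t₂ ≤ b → ∃ u v : ℝ, 0 < v ∧
      gHyp k u v t₁ = g t₁ ∧ gHyp k u v t₂ = g t₂ ∧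
      ∀ t ∈ Icc t₁ t₂, g t ≤ gHyp k u v t) :
    ∀ t ∈ Icc a b, (derivWithin (derivWithin g (Icc a b)) (Icc a b)) t ≥ Real.sqrt (-k) * (1 - ((derivWithin g (Icc a b)) t) ^ 2) * coth (Real.sqrt (-k) * g t) := by
  set s := Real.sqrt (-k) with hsdef
  have hs : 0 < s := Real.sqrt_pos.2 (by linarith)
  have hUD : UniqueDiffOn ℝ (Icc a b) := uniqueDiffOn_Icc hab
  set g1 := derivWithin g (Icc a b) with hg1def
  set g2 := derivWithin g1 (Icc a b) with hg2def
  have hC1 : ContDiffOn ℝ 1 g1 (Icc a b) := hC2.derivWithin hUD (by norm_num)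
  have hgd : DifferentiableOn ℝ g (Icc a b) := hC2.differentiableOn (by norm_num)
  have hg1d : DifferentiableOn ℝ g1 (Icc a b) := hC1.differentiableOn (by norm_num)
  have hgc : ContinuousOn g (Icc a b) := hgd.continuousOn
  have hg1c : ContinuousOn g1 (Icc a b) := hg1d.continuousOn
  have hg2c : ContinuousOn g2 (Icc a b) := hC1.continuousOn_derivWithin hUD le_rfl
  -- derivatives at interior points
  have hgx : ∀ x ∈ Ioo a b, HasDerivAt g (g1 x) x := by
    intro x hx
    exact ((hgd x (Ioo_subset_Icc_self hx)).hasDerivWithinAt).hasDerivAt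
      (Icc_mem_nhds hx.1 hx.2)
  have hg1x : ∀ x ∈ Ioo a b, HasDerivAt g1 (g2 x) x := by
    intro x hx
    exact ((hg1d x (Ioo_subset_Icc_self hx)).hasDerivWithinAt).hasDerivAt
      (Icc_mem_nhds hx.1 hx.2)
  intro t₀ ht₀
  by_contra h0
  push_neg at h0
  -- the defect function F
  set F : ℝ → ℝ := fun t =>
    s ^ 2 * Real.cosh (s * g t) * (1 - g1 t ^ 2) - s * Real.sinh (s * g t) * g2 t with hFdef
  have hsinh0 : 0 < Real.sinh (s * g t₀) :=
    Real.sinh_pos_iff.2 (mul_pos hs (hpos t₀ ht₀))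
  have hF0 : 0 < F t₀ := by
    rw [coth, ← mul_div_assoc, lt_div_iff₀ hsinh0] at h0
    simp only [hFdef]
    nlinarith [h0, hs]
  have hFc : ContinuousOn F (Icc a b) := by
    apply ContinuousOn.sub
    · exact (continuousOn_const.mul (Real.continuous_cosh.comp_continuousOn
        (continuousOn_const.mul hgc))).mul (continuousOn_const.sub (hg1c.pow 2))
    · exact (continuousOn_const.mul (Real.continuous_sinh.comp_continuousOn
        (continuousOn_const.mul hgc))).mul hg2c
  have hev : {t | 0 < F t} ∈ nhdsWithin t₀ (Icc a b) :=
    (hFc t₀ ht₀).eventually (eventually_gt_nhds hF0)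
  obtain ⟨U, hUopen, hUt₀, hUsub⟩ := mem_nhdsWithin.1 hev
  obtain ⟨ε, hε, hball⟩ := Metric.isOpen_iff.1 hUopen t₀ hUt₀
  set t₁ := max a (t₀ - ε / 2) with ht₁def
  set t₂ := min b (t₀ + ε / 2) with ht₂def
  have ht₁a : a ≤ t₁ := le_max_left _ _
  have ht₂b : t₂ ≤ b := min_le_left _ _
  have ht₁₂ : t₁ < t₂ := by
    apply max_lt
    · exact lt_min hab (by linarith [ht₀.1])
    · exact lt_min (by linarith [ht₀.2]) (by linarith)
  have hsub : Icc t₁ t₂ ⊆ Icc a b := Icc_subset_Icc ht₁a ht₂b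
  have hFpos : ∀ t ∈ Icc t₁ t₂, 0 < F t := by
    intro t ht
    apply hUsub
    refine ⟨hball ?_, hsub ht⟩
    rw [Real.ball_eq_Ioo]
    constructor
    · have := le_max_right a (t₀ - ε / 2)
      have := ht.1
      simp only [ht₁def] at *
      linarith [le_max_right a (t₀ - ε / 2)]
    · have := min_le_right b (t₀ + ε / 2)
      linarith [ht.2]
  obtain ⟨u, v, hv, he1, he2, hle⟩ := hcmp t₁ t₂ ht₁a ht₁₂ ht₂b
  set ψ : ℝ → ℝ := fun t => ((u ^ 2 + v ^ 2) * Real.exp (-s * t) + Real.exp (s * t)) / (2 * v)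
    with hψdef
  have hcoshH : ∀ t, Real.cosh (s * gHyp k u v t) = ψ t := fun t => cosh_sqrt_gHyp k u v hk hv t
  set f : ℝ → ℝ := fun t => ψ t - Real.cosh (s * g t) with hfdef
  have hf1 : f t₁ = 0 := by
    simp only [hfdef]
    rw [← hcoshH t₁, he1, sub_self]
  have hf2 : f t₂ = 0 := by
    simp only [hfdef]
    rw [← hcoshH t₂, he2, sub_self]
  have hfnn : ∀ t ∈ Icc t₁ t₂, 0 ≤ f t := by
    intro t ht
    have hgt : 0 < g t := hpos t (hsub ht)
    have hle' : g t ≤ gHyp k u v t := hle t ht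
    have : Real.cosh (s * g t) ≤ Real.cosh (s * gHyp k u v t) := by
      apply Real.cosh_le_cosh.2
      rw [abs_of_nonneg (by positivity), abs_of_nonneg (by nlinarith)]
      nlinarith
    simp only [hfdef]
    rw [← hcoshH t]
    linarith
  -- first derivative of f on Ioo a b
  have hψx : ∀ x : ℝ, HasDerivAt ψ
      (((u ^ 2 + v ^ 2) * (-s * Real.exp (-s * x)) + s * Real.exp (s * x)) / (2 * v)) x := by
    intro x
    have h1 : HasDerivAt (fun t => Real.exp (-s * t)) (-s * Real.exp (-s * x)) x := by
      simpa [mul_comm] using (((hasDerivAt_id x).const_mul (-s)).exp)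
    have h2 : HasDerivAt (fun t => Real.exp (s * t)) (s * Real.exp (s * x)) x := by
      simpa [mul_comm] using (((hasDerivAt_id x).const_mul s).exp)
    exact ((h1.const_mul (u ^ 2 + v ^ 2)).add h2).div_const (2 * v)
  have hφx : ∀ x ∈ Ioo a b, HasDerivAt (fun t => Real.cosh (s * g t))
      (Real.sinh (s * g x) * (s * g1 x)) x := by
    intro x hx
    exact ((hgx x hx).const_mul s).cosh
  have hfderiv : ∀ x ∈ Ioo a b, deriv f x =
      ((u ^ 2 + v ^ 2) * (-s * Real.exp (-s * x)) + s * Real.exp (s * x)) / (2 * v)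
        - Real.sinh (s * g x) * (s * g1 x) := by
    intro x hx
    exact ((hψx x).sub (hφx x hx)).deriv
  -- second derivative positivity on Ioo t₁ t₂
  have hIoo : Ioo t₁ t₂ ⊆ Ioo a b := Ioo_subset_Ioo ht₁a ht₂b
  have hkey : ∀ x ∈ interior (Icc t₁ t₂), 0 < deriv^[2] f x := by
    rw [interior_Icc]
    intro x hx
    have hxab : x ∈ Ioo a b := hIoo hx
    have hde : deriv f =ᶠ[nhds x] fun y =>
        ((u ^ 2 + v ^ 2) * (-s * Real.exp (-s * y)) + s * Real.exp (s * y)) / (2 * v)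
          - Real.sinh (s * g y) * (s * g1 y) := by
      filter_upwards [isOpen_Ioo.mem_nhds hxab] with y hy using hfderiv y hy
    have hψ'x : HasDerivAt (fun y : ℝ =>
        ((u ^ 2 + v ^ 2) * (-s * Real.exp (-s * y)) + s * Real.exp (s * y)) / (2 * v))
        (((u ^ 2 + v ^ 2) * (-s * (-s * Real.exp (-s * x))) + s * (s * Real.exp (s * x))) / (2 * v)) x := by
      have h1 : HasDerivAt (fun t => Real.exp (-s * t)) (-s * Real.exp (-s * x)) x := by
        simpa [mul_comm] using (((hasDerivAt_id x).const_mul (-s)).exp)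
      have h2 : HasDerivAt (fun t => Real.exp (s * t)) (s * Real.exp (s * x)) x := by
        simpa [mul_comm] using (((hasDerivAt_id x).const_mul s).exp)
      exact (((h1.const_mul (-s)).const_mul (u ^ 2 + v ^ 2)).add (h2.const_mul s)).div_const (2 * v)
    have hsinx : HasDerivAt (fun y => Real.sinh (s * g y)) (Real.cosh (s * g x) * (s * g1 x)) x :=
      ((hgx x hxab).const_mul s).sinh
    have hmulx : HasDerivAt (fun y => Real.sinh (s * g y) * (s * g1 y))
        (Real.cosh (s * g x) * (s * g1 x) * (s * g1 x) + Real.sinh (s * g x) * (s * g2 x)) x :=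
      hsinx.mul ((hg1x x hxab).const_mul s)
    have hd2 : deriv (deriv f) x =
        ((u ^ 2 + v ^ 2) * (-s * (-s * Real.exp (-s * x))) + s * (s * Real.exp (s * x))) / (2 * v)
          - (Real.cosh (s * g x) * (s * g1 x) * (s * g1 x) + Real.sinh (s * g x) * (s * g2 x)) := by
      rw [hde.deriv_eq]
      exact (hψ'x.sub hmulx).deriv
    have h2eq : deriv^[2] f x = deriv (deriv f) x := by
      simp [Function.iterate_succ, Function.comp]
    rw [h2eq, hd2]
    have hfx : 0 ≤ f x := hfnn x (Ioo_subset_Icc_self hx)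
    have hFx : 0 < F x := hFpos x (Ioo_subset_Icc_self hx)
    simp only [hfdef, hψdef] at hfx
    simp only [hFdef] at hFx
    have hψψ : ((u ^ 2 + v ^ 2) * (-s * (-s * Real.exp (-s * x))) + s * (s * Real.exp (s * x))) / (2 * v)
        = s ^ 2 * (((u ^ 2 + v ^ 2) * Real.exp (-s * x) + Real.exp (s * x)) / (2 * v)) := by
      field_simp
    rw [hψψ]
    nlinarith [mul_nonneg (sq_nonneg s) hfx, hFx]
  -- strict convexity and contradiction
  have hfc : ContinuousOn f (Icc t₁ t₂) := by
    apply ContinuousOn.sub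
    · apply ContinuousOn.div_const
      exact (continuousOn_const.mul (Real.continuous_exp.comp_continuousOn
        (continuousOn_const.mul continuousOn_id))).add
        (Real.continuous_exp.comp_continuousOn (continuousOn_const.mul continuousOn_id))
    · exact Real.continuous_cosh.comp_continuousOn (continuousOn_const.mul (hgc.mono hsub))
  have hconv : StrictConvexOn ℝ (Icc t₁ t₂) f :=
    strictConvexOn_of_deriv2_pos (convex_Icc t₁ t₂) hfc hkey
  have hmid := hconv.2 (left_mem_Icc.2 ht₁₂.le) (right_mem_Icc.2 ht₁₂.le) ht₁₂.ne
    (by norm_num : (0:ℝ) < 1/2) (by norm_num : (0:ℝ) < 1/2) (by norm_num)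
  rw [hf1, hf2] at hmid
  have hmem : (1/2 : ℝ) • t₁ + (1/2 : ℝ) • t₂ ∈ Icc t₁ t₂ := by
    constructor <;> · simp only [smul_eq_mul]; linarith
  have := hfnn _ hmem
  simp only [smul_eq_mul] at hmid this
  linarith
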